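/- Let (X,d) be a metric space, let α be a partial action of ℤ on X with every α_n uniformly continuous, and suppose X = A_1 ∪ … ∪ A_k where each A_i is a closed (not necessarily disjoint) partially-invariant subset of X. Then ℏ_d(α) = max_{1≤i≤k} ℏ_d(α|_{A_i}). -/

import Mathlib

open Filter Topology Set

/-- A partial action of the group `ℤ` on a topological space `X`:
open domains `dom n` with `dom 0 = X`, homeomorphisms `act n : dom (-n) → dom n`
(here encoded as globally defined maps, continuous on their domains), satisfying
`α_n(X_{-n} ∩ X_m) = X_n ∩ X_{n+m}` and `α_n ∘ α_m = α_{n+m}` on `X_{-m} ∩ X_{-m-n}`. -/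
structure PartialZAction (X : Type*) [TopologicalSpace X] where
  dom : ℤ → Set X
  act : ℤ → X → X
  isOpen_dom : ∀ n : ℤ, IsOpen (dom n)
  dom_zero : dom 0 = Set.univ
  act_zero : ∀ x : X, act 0 x = x
  image_inter : ∀ n m : ℤ, act n '' (dom (-n) ∩ dom m) = dom n ∩ dom (n + m)
  act_act : ∀ (n m : ℤ) (x : X), x ∈ dom (-m) → x ∈ dom (-m - n) →
    act n (act m x) = act (n + m) x
  continuousOn : ∀ n : ℤ, ContinuousOn (act n) (dom (-n))

variable {X : Type*} [TopologicalSpace X]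

/-- `I_n(x) = {i ∈ {0,…,n-1} : x ∈ X_{-i}}`. -/
def Iset (α : PartialZAction X) (n : ℕ) (x : X) : Set ℕ :=
  {i : ℕ | i < n ∧ x ∈ α.dom (-(i : ℤ))}

/-- `d_n(x,y) = max_{i ∈ I_n(x) ∩ I_n(y)} ρ(α_i(x), α_i(y))`. -/
noncomputable def dynDist (ρ : X → X → ℝ) (α : PartialZAction X) (n : ℕ) (x y : X) : ℝ :=
  sSup ((fun i : ℕ => ρ (α.act i x) (α.act i y)) '' (Iset α n x ∩ Iset α n y))

/-- `A` is `(n,ε)`-separated. -/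
def IsPSeparated (ρ : X → X → ℝ) (α : PartialZAction X) (n : ℕ) (ε : ℝ) (A : Set X) : Prop :=
  ∀ x ∈ A, ∀ y ∈ A, x ≠ y → ε ≤ dynDist ρ α n x y

/-- `B` is `(n,ε)`-spanning for `K`. -/
def IsPSpanning (ρ : X → X → ℝ) (α : PartialZAction X) (n : ℕ) (ε : ℝ) (K B : Set X) : Prop :=
  ∀ x ∈ K, ∃ y ∈ B, Iset α n x = Iset α n y ∧ dynDist ρ α n x y < ε

/-- `𝒰` is an open `(n,ε)`-cover of `K`. -/
def IsPCover (ρ : X → X → ℝ) (α : PartialZAction X) (n : ℕ) (ε : ℝ) (K : Set X)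
    (𝒰 : Set (Set X)) : Prop :=
  (∀ U ∈ 𝒰, IsOpen U) ∧ K ⊆ ⋃₀ 𝒰 ∧ ∀ U ∈ 𝒰, ∀ x ∈ U, ∀ y ∈ U, dynDist ρ α n x y < ε

/-- `sep(n,ε,α,K)`: maximal cardinality of an `(n,ε)`-separated subset of `K`. -/
noncomputable def sepCount (ρ : X → X → ℝ) (α : PartialZAction X) (n : ℕ) (ε : ℝ)
    (K : Set X) : ℕ :=
  sSup {m : ℕ | ∃ A : Finset X, ↑A ⊆ K ∧ IsPSeparated ρ α n ε ↑A ∧ A.card = m}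

/-- `span(n,ε,α,K)`: minimal cardinality of an `(n,ε)`-spanning subset of `K`. -/
noncomputable def spanCount (ρ : X → X → ℝ) (α : PartialZAction X) (n : ℕ) (ε : ℝ)
    (K : Set X) : ℕ :=
  sInf {m : ℕ | ∃ B : Finset X, ↑B ⊆ K ∧ IsPSpanning ρ α n ε K ↑B ∧ B.card = m}

/-- `cov(n,ε,α,K)`: minimal cardinality of a finite `(n,ε)`-cover of `K`. -/
noncomputable def covCount (ρ : X → X → ℝ) (α : PartialZAction X) (n : ℕ) (ε : ℝ)
    (K : Set X) : ℕ :=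
  sInf {m : ℕ | ∃ 𝒰 : Finset (Set X), IsPCover ρ α n ε K ↑𝒰 ∧ 𝒰.card = m}

/-- `h_ε(α,K) = limsup_n (1/n) log sep(n,ε,α,K)`. -/
noncomputable def entSep (ρ : X → X → ℝ) (α : PartialZAction X) (K : Set X) (ε : ℝ) : EReal :=
  Filter.limsup (fun n : ℕ => ((Real.log (sepCount ρ α n ε K) / n : ℝ) : EReal)) Filter.atTop

/-- The partial topological entropy `ℏ_ρ(α) = sup_{K compact} lim_{ε→0} h_ε(α,K)`
(the limit as `ε → 0` is the supremum over `ε > 0` by monotonicity). -/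
noncomputable def pEntropy (ρ : X → X → ℝ) (α : PartialZAction X) : EReal :=
  ⨆ (K : Set X) (_ : IsCompact K), ⨆ (ε : ℝ) (_ : 0 < ε), entSep ρ α K ε

lemma dynDist_lt_of_forall {X : Type*} [MetricSpace X] (α : PartialZAction X) {n : ℕ} {ε : ℝ}
    (hε : 0 < ε) {x y : X}
    (h : ∀ i ∈ Iset α n x ∩ Iset α n y, dist (α.act i x) (α.act i y) < ε) :
    dynDist dist α n x y < ε := by
  set S := (fun i : ℕ => dist (α.act i x) (α.act i y)) '' (Iset α n x ∩ Iset α n y) with hS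
  have hfin : S.Finite :=
    (((Set.finite_Iio n).subset (fun i hi => hi.1.1)).image _)
  rcases S.eq_empty_or_nonempty with hne | hne
  · simp only [dynDist, ← hS, hne, Real.sSup_empty]; exact hε
  · have := hne.csSup_mem hfin
    obtain ⟨i, hi, hEq⟩ := this
    have : dynDist dist α n x y = dist (α.act i x) (α.act i y) := hEq.symm
    rw [this]; exact h i hi

lemma sepSet_bddAbove {X : Type*} [MetricSpace X] (α : PartialZAction X)
    (hUC : ∀ (k : ℤ) (ε : ℝ), 0 < ε → ∃ δ > 0, ∀ x ∈ α.dom (-k), ∀ y ∈ α.dom (-k),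
      dist x y < δ → dist (α.act k x) (α.act k y) < ε)
    {K : Set X} (hK : IsCompact K) {ε : ℝ} (hε : 0 < ε) (n : ℕ) :
    BddAbove {m : ℕ | ∃ A : Finset X, ↑A ⊆ K ∧ IsPSeparated dist α n ε ↑A ∧ A.card = m} := by
  obtain ⟨δ, hδ0, hδ⟩ : ∃ δ > 0, ∀ i : ℕ, i < n → ∀ x ∈ α.dom (-(i:ℤ)), ∀ y ∈ α.dom (-(i:ℤ)),
      dist x y < δ → dist (α.act i x) (α.act i y) < ε := by
    induction n with
    | zero => exact ⟨1, one_pos, fun i hi => by omega⟩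
    | succ m ih =>
      obtain ⟨δ₁, h1, h2⟩ := ih
      obtain ⟨δ₂, h3, h4⟩ := hUC m ε hε
      refine ⟨min δ₁ δ₂, lt_min h1 h3, fun i hi x hx y hy hxy => ?_⟩
      rcases Nat.lt_or_ge i m with h | h
      · exact h2 i h x hx y hy (hxy.trans_le (min_le_left _ _))
      · have : i = m := by omega
        subst this
        exact h4 x hx y hy (hxy.trans_le (min_le_right _ _))
  obtain ⟨T, hT⟩ := hK.elim_finite_subcover (fun x : X => Metric.ball x (δ/2))
    (fun _ => Metric.isOpen_ball)
    (fun x _ => Set.mem_iUnion.2 ⟨x, Metric.mem_ball_self (by linarith)⟩)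
  refine ⟨T.card, fun m hm => ?_⟩
  obtain ⟨F, hFK, hFsep, rfl⟩ := hm
  have hchoice : ∀ a ∈ F, ∃ t ∈ T, a ∈ Metric.ball t (δ/2) := by
    intro a ha
    have := hT (hFK ha)
    simpa using this
  choose! f hfT hfball using hchoice
  refine Finset.card_le_card_of_injOn f (fun a ha => hfT a ha) ?_
  intro a ha b hb hab
  simp only [Finset.mem_coe] at ha hb
  by_contra hne
  have h1 : dist a b < δ := by
    have ha' := hfball a ha
    have hb' := hfball b hb
    rw [Metric.mem_ball] at ha' hb'
    have htri := dist_triangle a (f a) b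
    have : dist (f a) b = dist b (f b) := by rw [hab, dist_comm]
    linarith
  have h2 := hFsep a (by simpa using ha) b (by simpa using hb) hne
  have h3 : dynDist dist α n a b < ε := by
    refine dynDist_lt_of_forall α hε (fun i hi => ?_)
    exact hδ i hi.1.1 a hi.1.2 b hi.2.2 h1
  exact absurd h2 (not_le.2 h3)

lemma dynDist_transfer {X : Type*} [MetricSpace X] (α : PartialZAction X) {Y : Set X}
    (βY : PartialZAction Y)
    (hdom : ∀ n : ℤ, βY.dom n = Subtype.val ⁻¹' α.dom n)
    (hact : ∀ n : ℤ, ∀ x ∈ βY.dom (-n), ((βY.act n x : X)) = α.act n ↑x)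
    (n : ℕ) (x y : Y) :
    dynDist (fun a b : Y => dist (a : X) (b : X)) βY n x y = dynDist dist α n ↑x ↑y := by
  unfold dynDist
  have hI : ∀ z : Y, Iset βY n z = Iset α n (z : X) := by
    intro z; ext i; simp [Iset, hdom]
  congr 1
  rw [show Iset βY n x ∩ Iset βY n y = Iset α n ↑x ∩ Iset α n ↑y by rw [hI, hI]]
  refine Set.image_congr (fun i hi => ?_)
  have hx : x ∈ βY.dom (-(i : ℤ)) := by rw [hdom]; exact hi.1.2
  have hy : y ∈ βY.dom (-(i : ℤ)) := by rw [hdom]; exact hi.2.2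
  show dist ((βY.act (i:ℤ) x : Y) : X) ((βY.act (i:ℤ) y : Y) : X) = _
  rw [hact (i : ℤ) x hx, hact (i : ℤ) y hy]

lemma sepCount_transfer {X : Type*} [MetricSpace X] (α : PartialZAction X) {Y : Set X}
    (βY : PartialZAction Y)
    (hdom : ∀ n : ℤ, βY.dom n = Subtype.val ⁻¹' α.dom n)
    (hact : ∀ n : ℤ, ∀ x ∈ βY.dom (-n), ((βY.act n x : X)) = α.act n ↑x)
    (S : Set Y) (n : ℕ) (ε : ℝ) :
    sepCount (fun a b : Y => dist (a : X) (b : X)) βY n ε S = sepCount dist α n ε (Subtype.val '' S) := by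
  classical
  unfold sepCount
  congr 1
  ext m
  constructor
  · rintro ⟨F, hFS, hFsep, rfl⟩
    refine ⟨F.image Subtype.val, ?_, ?_, Finset.card_image_of_injective F Subtype.val_injective⟩
    · rw [Finset.coe_image]; exact Set.image_mono hFS
    · intro x hx y hy hxy
      simp only [Finset.coe_image, Set.mem_image, Finset.mem_coe] at hx hy
      obtain ⟨a, ha, rfl⟩ := hx
      obtain ⟨b, hb, rfl⟩ := hy
      have hne : a ≠ b := fun h => hxy (by rw [h])
      have := hFsep a ha b hb hne
      rwa [dynDist_transfer α βY hdom hact] at this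
  · rintro ⟨F, hFS, hFsep, rfl⟩
    have hinj : Set.InjOn (Subtype.val : Y → X) ((Subtype.val : Y → X) ⁻¹' (↑F : Set X)) :=
      Subtype.val_injective.injOn
    refine ⟨F.preimage (Subtype.val : Y → X) hinj, ?_, ?_, ?_⟩
    · intro a ha
      rw [Finset.mem_coe, Finset.mem_preimage] at ha
      obtain ⟨b, hb, hba⟩ := hFS ha
      rwa [show b = a from Subtype.val_injective hba] at hb
    · intro a ha b hb hab
      rw [Finset.mem_coe, Finset.mem_preimage] at ha hb
      have := hFsep ↑a ha ↑b hb (fun h => hab (Subtype.val_injective h))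
      rwa [dynDist_transfer α βY hdom hact]
    · rw [Finset.card_preimage]
      have : F.filter (· ∈ Set.range (Subtype.val : Y → X)) = F := by
        refine Finset.filter_true_of_mem (fun x hx => ?_)
        obtain ⟨b, -, hb⟩ := hFS hx
        exact ⟨b, hb⟩
      rw [this]

lemma entSep_transfer {X : Type*} [MetricSpace X] (α : PartialZAction X) {Y : Set X}
    (βY : PartialZAction Y)
    (hdom : ∀ n : ℤ, βY.dom n = Subtype.val ⁻¹' α.dom n)
    (hact : ∀ n : ℤ, ∀ x ∈ βY.dom (-n), ((βY.act n x : X)) = α.act n ↑x)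
    (S : Set Y) (ε : ℝ) :
    entSep (fun a b : Y => dist (a : X) (b : X)) βY S ε = entSep dist α (Subtype.val '' S) ε := by
  unfold entSep
  congr 1
  ext n
  rw [sepCount_transfer α βY hdom hact]

lemma limsup_iSup_le {ι : Type*} [Fintype ι] (f : ι → ℕ → EReal) :
    Filter.limsup (fun n => ⨆ i, f i n) Filter.atTop ≤ ⨆ i, Filter.limsup (f i) Filter.atTop := by
  classical
  have main : ∀ s : Finset ι,
      Filter.limsup (fun n => s.sup (fun i => f i n)) Filter.atTop ≤
        s.sup (fun i => Filter.limsup (f i) Filter.atTop) := by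
    intro s
    induction s using Finset.induction with
    | empty => simp [Filter.limsup_const]
    | insert a s ha ih =>
      simp only [Finset.sup_insert]
      calc Filter.limsup (fun n => f a n ⊔ s.sup (fun i => f i n)) Filter.atTop
          = Filter.limsup (f a) Filter.atTop ⊔
            Filter.limsup (fun n => s.sup (fun i => f i n)) Filter.atTop := limsup_max
        _ ≤ _ := sup_le_sup le_rfl ih
  calc Filter.limsup (fun n => ⨆ i, f i n) Filter.atTop
      = Filter.limsup (fun n => Finset.univ.sup (fun i => f i n)) Filter.atTop := by
        simp [Finset.sup_univ_eq_iSup]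
    _ ≤ Finset.univ.sup (fun i => Filter.limsup (f i) Filter.atTop) := main _
    _ = ⨆ i, Filter.limsup (f i) Filter.atTop := Finset.sup_univ_eq_iSup _


/-- if `X = A_1 ∪ ⋯ ∪ A_k` with each `A_i` closed and partially-invariant,
then `ℏ_d(α) = max_i ℏ_d(α|_{A_i})`.  The restricted partial action `α|_{A_i}` is encoded
as a partial action `β i` on the subspace `A i` with domains `A i ∩ X_n` and maps the
restrictions of the `α_n`. -/
theorem stmt10 {X : Type*} [MetricSpace X] (α : PartialZAction X)
    (hUC : ∀ (k : ℤ) (ε : ℝ), 0 < ε → ∃ δ > 0, ∀ x ∈ α.dom (-k), ∀ y ∈ α.dom (-k),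
      dist x y < δ → dist (α.act k x) (α.act k y) < ε)
    (k : ℕ) (hk : 0 < k) (A : Fin k → Set X)
    (hclosed : ∀ i, IsClosed (A i))
    (hinv : ∀ (i : Fin k) (n : ℤ), α.act n '' (A i ∩ α.dom (-n)) ⊆ A i ∩ α.dom n)
    (hcover : (⋃ i, A i) = Set.univ)
    (β : (i : Fin k) → PartialZAction (A i))
    (hβdom : ∀ (i : Fin k) (n : ℤ), (β i).dom n = Subtype.val ⁻¹' α.dom n)
    (hβact : ∀ (i : Fin k) (n : ℤ), ∀ x ∈ (β i).dom (-n), ((β i).act n x : X) = α.act n ↑x) :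
    pEntropy dist α =
      ⨆ i : Fin k, pEntropy (fun x y : A i => dist (x : X) (y : X)) (β i) := by
  classical
  haveI : Nonempty (Fin k) := ⟨⟨0, hk⟩⟩
  apply le_antisymm
  · -- pEntropy α ≤ ⨆ i pEntropy (β i)
    refine iSup₂_le fun K hK => iSup₂_le fun ε hε => ?_
    set w : Fin k → ℕ → EReal :=
      fun i n => ((Real.log (sepCount dist α n ε (K ∩ A i)) / n : ℝ) : EReal) with hw
    set V : ℕ → EReal := fun n => ((Real.log k / n : ℝ) : EReal) with hV
    have key : ∀ n : ℕ, ((Real.log (sepCount dist α n ε K) / n : ℝ) : EReal) ≤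
        V n + ⨆ i, w i n := by
      intro n
      obtain ⟨i₀, -, hi₀⟩ := Finset.exists_mem_eq_sup (Finset.univ : Finset (Fin k))
        Finset.univ_nonempty (fun i => sepCount dist α n ε (K ∩ A i))
      have hbound : sepCount dist α n ε K ≤ k * sepCount dist α n ε (K ∩ A i₀) := by
        apply csSup_le'
        rintro m ⟨F, hFK, hFsep, rfl⟩
        have hsub : F ⊆ Finset.univ.biUnion (fun i => F.filter (fun x => x ∈ A i)) := by
          intro x hx
          have hxu : x ∈ ⋃ i, A i := by rw [hcover]; exact Set.mem_univ x
          obtain ⟨i, hi⟩ := Set.mem_iUnion.1 hxu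
          exact Finset.mem_biUnion.2 ⟨i, Finset.mem_univ i, Finset.mem_filter.2 ⟨hx, hi⟩⟩
        have hstep : ∀ i : Fin k, (F.filter (fun x => x ∈ A i)).card ≤
            sepCount dist α n ε (K ∩ A i₀) := by
          intro i
          have h1 : (F.filter (fun x => x ∈ A i)).card ≤ sepCount dist α n ε (K ∩ A i) := by
            refine le_csSup (sepSet_bddAbove α hUC (hK.inter_right (hclosed i)) hε n)
              ⟨F.filter (fun x => x ∈ A i), ?_, ?_, rfl⟩
            · intro x hx
              rw [Finset.mem_coe, Finset.mem_filter] at hx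
              exact ⟨hFK hx.1, hx.2⟩
            · intro x hx y hy hxy
              rw [Finset.mem_coe, Finset.mem_filter] at hx hy
              exact hFsep x hx.1 y hy.1 hxy
          exact h1.trans (hi₀ ▸ Finset.le_sup (f := fun j => sepCount dist α n ε (K ∩ A j)) (Finset.mem_univ i))
        calc F.card ≤ _ := Finset.card_le_card hsub
          _ ≤ ∑ i, (F.filter (fun x => x ∈ A i)).card := Finset.card_biUnion_le
          _ ≤ ∑ _i : Fin k, sepCount dist α n ε (K ∩ A i₀) :=
              Finset.sum_le_sum (fun i _ => hstep i)
          _ = k * sepCount dist α n ε (K ∩ A i₀) := by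
              simp [Finset.sum_const, Finset.card_univ]
      have hlog : Real.log (sepCount dist α n ε K) / n ≤
          Real.log k / n + Real.log (sepCount dist α n ε (K ∩ A i₀)) / n := by
        set a := sepCount dist α n ε K
        set b := sepCount dist α n ε (K ∩ A i₀)
        have hmain : Real.log a ≤ Real.log k + Real.log b := by
          rcases Nat.eq_zero_or_pos a with ha | ha
          · rw [ha]
            simp only [Nat.cast_zero, Real.log_zero]
            positivity
          · have hb : 0 < b := by
              by_contra hb
              push_neg at hb
              interval_cases b
              omega
            have h1 : (a : ℝ) ≤ (k : ℝ) * (b : ℝ) := by exact_mod_cast hbound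
            have h2 := Real.log_le_log (by exact_mod_cast ha) h1
            rwa [Real.log_mul (by positivity) (by positivity)] at h2
        rw [← add_div]
        gcongr
      calc ((Real.log (sepCount dist α n ε K) / n : ℝ) : EReal)
          ≤ ((Real.log k / n + Real.log (sepCount dist α n ε (K ∩ A i₀)) / n : ℝ) : EReal) :=
            EReal.coe_le_coe_iff.2 hlog
        _ = V n + ((Real.log (sepCount dist α n ε (K ∩ A i₀)) / n : ℝ) : EReal) :=
            EReal.coe_add _ _
        _ ≤ V n + ⨆ i, w i n := add_le_add_right (le_iSup (fun i => w i n) i₀) _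
    have hVlim : Filter.limsup V Filter.atTop = (0 : EReal) := by
      have hten : Tendsto V atTop (𝓝 (0 : EReal)) := by
        have h0 := tendsto_const_div_atTop_nhds_zero_nat (Real.log k)
        have h1 := (continuous_coe_real_ereal.tendsto (0 : ℝ)).comp h0
        simpa [hV, Function.comp_def] using h1
      exact hten.limsup_eq
    have h1 : entSep dist α K ε ≤
        Filter.limsup (fun n => V n + ⨆ i, w i n) Filter.atTop :=
      limsup_le_limsup (Eventually.of_forall key)
    have h3 : Filter.limsup (fun n => V n + ⨆ i, w i n) Filter.atTop ≤
        Filter.limsup V Filter.atTop + Filter.limsup (fun n => ⨆ i, w i n) Filter.atTop := by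
      apply EReal.limsup_add_le
      · exact Or.inl (by rw [hVlim]; simp)
      · exact Or.inl (by rw [hVlim]; simp)
    have h5 : ∀ i : Fin k, Filter.limsup (w i) Filter.atTop ≤
        pEntropy (fun x y : A i => dist (x : X) (y : X)) (β i) := by
      intro i
      have hKA : Subtype.val '' ((Subtype.val : A i → X) ⁻¹' (K ∩ A i)) = K ∩ A i := by
        rw [Set.image_preimage_eq_inter_range, Subtype.range_coe]
        exact Set.inter_eq_left.2 Set.inter_subset_right
      have heq : Filter.limsup (w i) Filter.atTop =
          entSep (fun x y : A i => dist (x : X) (y : X)) (β i)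
            ((Subtype.val : A i → X) ⁻¹' (K ∩ A i)) ε := by
        rw [entSep_transfer α (β i) (hβdom i) (hβact i), hKA]
        rfl
      rw [heq]
      have hc : IsCompact ((Subtype.val : A i → X) ⁻¹' (K ∩ A i)) := by
        rw [IsEmbedding.subtypeVal.isCompact_iff, hKA]
        exact hK.inter_right (hclosed i)
      exact le_iSup_of_le ((Subtype.val : A i → X) ⁻¹' (K ∩ A i))
        (le_iSup_of_le hc (le_iSup_of_le ε (le_iSup_of_le hε le_rfl)))
    calc entSep dist α K ε ≤ _ := h1
      _ ≤ _ := h3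
      _ = Filter.limsup (fun n => ⨆ i, w i n) Filter.atTop := by rw [hVlim, zero_add]
      _ ≤ ⨆ i, Filter.limsup (w i) Filter.atTop := limsup_iSup_le w
      _ ≤ ⨆ i : Fin k, pEntropy (fun x y : A i => dist (x : X) (y : X)) (β i) :=
          iSup_mono h5
  · -- ⨆ i pEntropy (β i) ≤ pEntropy α
    refine iSup_le fun i => iSup₂_le fun K hK => iSup₂_le fun ε hε => ?_
    rw [entSep_transfer α (β i) (hβdom i) (hβact i) K ε]
    have hc : IsCompact (Subtype.val '' K) := hK.image continuous_subtype_val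
    exact le_iSup_of_le (Subtype.val '' K)
      (le_iSup_of_le hc (le_iSup_of_le ε (le_iSup_of_le hε le_rfl)))
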